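/- For every n ≥ 0 and every function u : V* → ℝ, there exists a unique function ū_n : V* → ℝ such that ū_n(x) = u(x) for every x ∈ V_n and E_{n+p}(ū_n, ū_n) = E_n(u,u) for every p ≥ 0. -/
import Mathlib


open scoped Classical
open Real Set

noncomputable section

abbrev Pt : Type := ℝ × ℝ

/-- The three corners of the unit triangle. -/
def sierA : Fin 3 → Pt
  | 0 => (0, 0)
  | 1 => (1 / 2, Real.sqrt 3 / 2)
  | 2 => (1, 0)

/-- The three contractions `φᵢ(x) = (x + aᵢ)/2`. -/
def ctr (i : Fin 3) (x : Pt) : Pt :=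
  ((x.1 + (sierA i).1) / 2, (x.2 + (sierA i).2) / 2)

/-- The vertex sets `V n`. -/
def V : ℕ → Finset Pt
  | 0 => {sierA 0, sierA 1, sierA 2}
  | n + 1 => (V n).image (ctr 0) ∪ (V n).image (ctr 1) ∪ (V n).image (ctr 2)

/-- The (ordered) edge sets: `(x, y) ∈ Ed n` iff `{x,y} ∈ E_n`; each undirected
edge appears with both orientations. -/
def Ed : ℕ → Finset (Pt × Pt)
  | 0 => (V 0 ×ˢ V 0).filter fun p => p.1 ≠ p.2
  | n + 1 => Finset.univ.biUnion fun i : Fin 3 => (Ed n).image fun p => (ctr i p.1, ctr i p.2)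

/-- `V* = ⋃ n, V n`. -/
def Vstar : Set Pt := ⋃ n, (V n : Set Pt)

/-- The level-`n` energy `E_n(u,u) = (5/3)^n Σ_{{x,y} ∈ E_n} (u y - u x)²`
(each undirected edge counted once, whence the division by 2). -/
def En (n : ℕ) (u : Pt → ℝ) : ℝ :=
  (5 / 3 : ℝ) ^ n * (∑ p ∈ Ed n, (u p.2 - u p.1) ^ 2) / 2

/-- The discrete Laplacian `Δ_n u (x) = 5^n Σ_{y ∼ₙ x} (u y - u x)`. -/
def lap (n : ℕ) (u : Pt → ℝ) (x : Pt) : ℝ :=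
  (5 : ℝ) ^ n * ∑ p ∈ (Ed n).filter (fun p => p.1 = x), (u p.2 - u p.1)

-- ==== auxiliary development ====

lemma s3_pos : (0:ℝ) < Real.sqrt 3 := Real.sqrt_pos.mpr (by norm_num)

lemma ctr_inj (i : Fin 3) : Function.Injective (ctr i) := by
  intro x y h
  have h1 : (x.1 + (sierA i).1) / 2 = (y.1 + (sierA i).1) / 2 := congrArg Prod.fst h
  have h2 : (x.2 + (sierA i).2) / 2 = (y.2 + (sierA i).2) / 2 := congrArg Prod.snd h
  have : x.1 = y.1 := by linarith
  have : x.2 = y.2 := by linarith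
  exact Prod.ext ‹x.1 = y.1› ‹x.2 = y.2›

lemma ctr_symm (i j : Fin 3) : ctr i (sierA j) = ctr j (sierA i) := by
  simp only [ctr]
  exact Prod.ext (by ring) (by ring)

/-- barycentric-style coordinates -/
def lam : Fin 3 → Pt → ℝ
  | 0 => fun p => Real.sqrt 3 * (1 - p.1) - p.2
  | 1 => fun p => 2 * p.2
  | 2 => fun p => Real.sqrt 3 * p.1 - p.2

lemma lam_sum (x : Pt) : lam 0 x + lam 1 x + lam 2 x = Real.sqrt 3 := by
  simp only [lam]; ring

lemma lam_ctr (i j : Fin 3) (x : Pt) :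
    lam j (ctr i x) = if j = i then (lam j x + Real.sqrt 3) / 2 else lam j x / 2 := by
  fin_cases i <;> fin_cases j <;> simp [lam, ctr, sierA] <;> ring

lemma lam_corner (i j : Fin 3) :
    lam i (sierA j) = if i = j then Real.sqrt 3 else 0 := by
  fin_cases i <;> fin_cases j <;> simp [lam, sierA] <;> ring

lemma lam_V {m : ℕ} {x : Pt} (hx : x ∈ V m) (k : Fin 3) :
    0 ≤ lam k x ∧ lam k x ≤ Real.sqrt 3 := by
  induction m generalizing x with
  | zero =>
    have : x = sierA 0 ∨ x = sierA 1 ∨ x = sierA 2 := by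
      simpa [V] using hx
    rcases this with h | h | h <;> subst h <;> rw [lam_corner] <;> split <;>
      first
      | exact ⟨le_of_lt s3_pos, le_refl _⟩
      | exact ⟨le_refl _, le_of_lt s3_pos⟩
  | succ m ih =>
    have : ∃ i : Fin 3, ∃ y ∈ V m, ctr i y = x := by
      simp only [V, Finset.mem_union, Finset.mem_image] at hx
      rcases hx with (⟨y, hy, h⟩ | ⟨y, hy, h⟩) | ⟨y, hy, h⟩
      exacts [⟨0, y, hy, h⟩, ⟨1, y, hy, h⟩, ⟨2, y, hy, h⟩]
    obtain ⟨i, y, hy, rfl⟩ := this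
    have hb := ih hy
    rw [lam_ctr]
    split <;> constructor <;> [linarith [s3_pos.le]; linarith; linarith; linarith [s3_pos.le]]

lemma lam_inj {x y : Pt} {i j : Fin 3} (hij : i ≠ j)
    (h1 : lam i x = lam i y) (h2 : lam j x = lam j y) : x = y := by
  fin_cases i <;> fin_cases j <;> simp_all [lam] <;>
    exact Prod.ext (by nlinarith [s3_pos]) (by nlinarith [s3_pos])


lemma mem_V_succ {m : ℕ} {x : Pt} :
    x ∈ V (m+1) ↔ ∃ i : Fin 3, ∃ y ∈ V m, ctr i y = x := by
  constructor
  · intro hx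
    simp only [V, Finset.mem_union, Finset.mem_image] at hx
    rcases hx with (⟨y, hy, h⟩ | ⟨y, hy, h⟩) | ⟨y, hy, h⟩
    exacts [⟨0, y, hy, h⟩, ⟨1, y, hy, h⟩, ⟨2, y, hy, h⟩]
  · rintro ⟨i, y, hy, rfl⟩
    simp only [V, Finset.mem_union, Finset.mem_image]
    fin_cases i
    · exact Or.inl (Or.inl ⟨y, hy, rfl⟩)
    · exact Or.inl (Or.inr ⟨y, hy, rfl⟩)
    · exact Or.inr ⟨y, hy, rfl⟩

lemma corner_eq_ctr (i : Fin 3) : ctr i (sierA i) = sierA i := by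
  fin_cases i <;> simp [ctr, sierA] <;> norm_num

lemma corner_mem (m : ℕ) (k : Fin 3) : sierA k ∈ V m := by
  induction m with
  | zero => fin_cases k <;> simp [V]
  | succ m ih => exact mem_V_succ.mpr ⟨k, sierA k, ih, corner_eq_ctr k⟩

lemma V_mono {m : ℕ} : V m ⊆ V (m+1) := by
  induction m with
  | zero =>
    intro x hx
    have : x = sierA 0 ∨ x = sierA 1 ∨ x = sierA 2 := by simpa [V] using hx
    rcases this with h | h | h <;> subst h <;> exact corner_mem 1 _
  | succ m ih =>
    intro x hx
    obtain ⟨i, y, hy, rfl⟩ := mem_V_succ.mp hx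
    exact mem_V_succ.mpr ⟨i, y, ih hy, rfl⟩

lemma V_le {m m' : ℕ} (h : m ≤ m') : V m ⊆ V m' := by
  induction h with
  | refl => exact fun _ h => h
  | step _ ih => exact fun x hx => V_mono (ih hx)

/-- the cross-cell coincidence lemma -/
lemma cross_cell {i j : Fin 3} (hij : i ≠ j) {x y : Pt}
    (hx0 : ∀ k, 0 ≤ lam k x ∧ lam k x ≤ Real.sqrt 3)
    (hy0 : ∀ k, 0 ≤ lam k y ∧ lam k y ≤ Real.sqrt 3)
    (h : ctr i x = ctr j y) : x = sierA j ∧ y = sierA i := by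
  have hi : lam i (ctr i x) = lam i (ctr j y) := by rw [h]
  have hj : lam j (ctr i x) = lam j (ctr j y) := by rw [h]
  rw [lam_ctr, lam_ctr] at hi hj
  rw [if_pos rfl, if_neg hij] at hi
  rw [if_neg (Ne.symm hij), if_pos rfl] at hj
  have hxi : lam i x = 0 := by have := (hx0 i).1; have := (hy0 i).2; linarith
  have hyi : lam i y = Real.sqrt 3 := by linarith
  have hyj : lam j y = 0 := by have := (hy0 j).1; have := (hx0 j).2; linarith
  have hxj : lam j x = Real.sqrt 3 := by linarith
  constructor
  · refine lam_inj hij ?_ ?_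
    · rw [hxi, lam_corner, if_neg hij]
    · rw [hxj, lam_corner, if_pos rfl]
  · refine lam_inj hij ?_ ?_
    · rw [hyi, lam_corner, if_pos rfl]
    · rw [hyj, lam_corner, if_neg hij.symm]

lemma edge_mem_V {m : ℕ} {p : Pt × Pt} (hp : p ∈ Ed m) : p.1 ∈ V m ∧ p.2 ∈ V m := by
  induction m generalizing p with
  | zero =>
    simp only [Ed, Finset.mem_filter, Finset.mem_product] at hp
    exact hp.1
  | succ m ih =>
    simp only [Ed, Finset.mem_biUnion, Finset.mem_image, Finset.mem_univ, true_and] at hp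
    obtain ⟨i, q, hq, rfl⟩ := hp
    exact ⟨mem_V_succ.mpr ⟨i, q.1, (ih hq).1, rfl⟩, mem_V_succ.mpr ⟨i, q.2, (ih hq).2, rfl⟩⟩

lemma edge_ne {m : ℕ} {p : Pt × Pt} (hp : p ∈ Ed m) : p.1 ≠ p.2 := by
  induction m generalizing p with
  | zero =>
    simp only [Ed, Finset.mem_filter] at hp
    exact hp.2
  | succ m ih =>
    simp only [Ed, Finset.mem_biUnion, Finset.mem_image, Finset.mem_univ, true_and] at hp
    obtain ⟨i, q, hq, rfl⟩ := hp
    exact fun h => ih hq (ctr_inj i h)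

/-- level sum -/
def S (m : ℕ) (v : Pt → ℝ) : ℝ := ∑ p ∈ Ed m, (v p.2 - v p.1) ^ 2

lemma Ssucc (m : ℕ) (v : Pt → ℝ) :
    S (m+1) v = ∑ i : Fin 3, S m (fun x => v (ctr i x)) := by
  have hdisj : ∀ i ∈ (Finset.univ : Finset (Fin 3)), ∀ j ∈ Finset.univ, i ≠ j →
      Disjoint ((Ed m).image fun p => (ctr i p.1, ctr i p.2))
               ((Ed m).image fun p => (ctr j p.1, ctr j p.2)) := by
    intro i _ j _ hij
    rw [Finset.disjoint_left]
    rintro a ha hb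
    simp only [Finset.mem_image] at ha hb
    obtain ⟨p, hp, hpe⟩ := ha
    obtain ⟨q, hq, hqe⟩ := hb
    have h1 : ctr i p.1 = ctr j q.1 := by
      rw [show ctr i p.1 = a.1 from congrArg Prod.fst hpe,
        show ctr j q.1 = a.1 from congrArg Prod.fst hqe]
    have h2 : ctr i p.2 = ctr j q.2 := by
      rw [show ctr i p.2 = a.2 from congrArg Prod.snd hpe,
        show ctr j q.2 = a.2 from congrArg Prod.snd hqe]
    have c1 := cross_cell hij (fun k => lam_V (edge_mem_V hp).1 k)
      (fun k => lam_V (edge_mem_V hq).1 k) h1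
    have c2 := cross_cell hij (fun k => lam_V (edge_mem_V hp).2 k)
      (fun k => lam_V (edge_mem_V hq).2 k) h2
    exact edge_ne hp (c1.1.trans c2.1.symm)
  have : S (m+1) v = ∑ i : Fin 3,
      ∑ p ∈ (Ed m).image (fun p => (ctr i p.1, ctr i p.2)), (v p.2 - v p.1)^2 := by
    rw [S, show Ed (m+1) = Finset.univ.biUnion
      (fun i : Fin 3 => (Ed m).image fun p => (ctr i p.1, ctr i p.2)) from rfl]
    exact Finset.sum_biUnion hdisj
  rw [this]
  refine Finset.sum_congr rfl fun i _ => ?_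
  rw [S, Finset.sum_image]
  intro p _ q _ h
  have h1 := ctr_inj i (congrArg Prod.fst h)
  have h2 := ctr_inj i (congrArg Prod.snd h)
  exact Prod.ext h1 h2


lemma corner_ne_01 : sierA 0 ≠ sierA 1 := by
  intro h
  have := congrArg Prod.snd h
  simp [sierA] at this
  nlinarith [s3_pos]

lemma corner_ne_02 : sierA 0 ≠ sierA 2 := by
  intro h
  have := congrArg Prod.fst h
  simp [sierA] at this

lemma corner_ne_12 : sierA 1 ≠ sierA 2 := by
  intro h
  have := congrArg Prod.snd h
  simp [sierA] at this

lemma S_congr {m : ℕ} {v w : Pt → ℝ} (h : ∀ x ∈ V m, v x = w x) : S m v = S m w := by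
  refine Finset.sum_congr rfl fun p hp => ?_
  rw [h _ (edge_mem_V hp).1, h _ (edge_mem_V hp).2]

lemma S0_eq (v : Pt → ℝ) :
    S 0 v = 2 * ((v (sierA 1) - v (sierA 0)) ^ 2 + (v (sierA 2) - v (sierA 1)) ^ 2
      + (v (sierA 0) - v (sierA 2)) ^ 2) := by
  have h01 := corner_ne_01
  have h02 := corner_ne_02
  have h12 := corner_ne_12
  have m0 : sierA 0 ∉ ({sierA 1, sierA 2} : Finset Pt) := by
    simp only [Finset.mem_insert, Finset.mem_singleton, not_or]; exact ⟨h01, h02⟩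
  have m1 : sierA 1 ∉ ({sierA 2} : Finset Pt) := by
    simp only [Finset.mem_singleton]; exact h12
  rw [S, show Ed 0 = (V 0 ×ˢ V 0).filter (fun p => p.1 ≠ p.2) from rfl,
    Finset.sum_filter, Finset.sum_product,
    show V 0 = {sierA 0, sierA 1, sierA 2} from rfl]
  simp only [Finset.sum_insert m0, Finset.sum_insert m1, Finset.sum_singleton]
  simp only [if_neg (fun h : sierA 0 ≠ sierA 0 => h rfl),
    if_neg (fun h : sierA 1 ≠ sierA 1 => h rfl),
    if_neg (fun h : sierA 2 ≠ sierA 2 => h rfl),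
    if_pos h01, if_pos h02, if_pos h12, if_pos (Ne.symm h01), if_pos (Ne.symm h02),
    if_pos (Ne.symm h12)]
  ring

lemma quad_nonneg (X Y Z : ℝ) :
    0 ≤ (X-Y)^2 + (Y-Z)^2 + (Z-X)^2 + 2*(X^2+Y^2+Z^2) := by positivity

lemma quad_zero {X Y Z : ℝ} (h : (X-Y)^2 + (Y-Z)^2 + (Z-X)^2 + 2*(X^2+Y^2+Z^2) = 0) :
    X = 0 ∧ Y = 0 ∧ Z = 0 := by
  refine ⟨?_, ?_, ?_⟩ <;>
    nlinarith [sq_nonneg (X-Y), sq_nonneg (Y-Z), sq_nonneg (Z-X),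
      sq_nonneg X, sq_nonneg Y, sq_nonneg Z]

lemma cell_identity (f : Pt → ℝ) :
    S 1 f = (3/5) * S 0 f
      + 2 * (((f (ctr 0 (sierA 1)) - (2*f (sierA 0) + 2*f (sierA 1) + f (sierA 2))/5)
              - (f (ctr 1 (sierA 2)) - (f (sierA 0) + 2*f (sierA 1) + 2*f (sierA 2))/5)) ^ 2
           + ((f (ctr 1 (sierA 2)) - (f (sierA 0) + 2*f (sierA 1) + 2*f (sierA 2))/5)
              - (f (ctr 0 (sierA 2)) - (2*f (sierA 0) + f (sierA 1) + 2*f (sierA 2))/5)) ^ 2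
           + ((f (ctr 0 (sierA 2)) - (2*f (sierA 0) + f (sierA 1) + 2*f (sierA 2))/5)
              - (f (ctr 0 (sierA 1)) - (2*f (sierA 0) + 2*f (sierA 1) + f (sierA 2))/5)) ^ 2
           + 2 * ((f (ctr 0 (sierA 1)) - (2*f (sierA 0) + 2*f (sierA 1) + f (sierA 2))/5) ^ 2
                + (f (ctr 1 (sierA 2)) - (f (sierA 0) + 2*f (sierA 1) + 2*f (sierA 2))/5) ^ 2
                + (f (ctr 0 (sierA 2)) - (2*f (sierA 0) + f (sierA 1) + 2*f (sierA 2))/5) ^ 2)) := by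
  rw [Ssucc, Fin.sum_univ_three, S0_eq, S0_eq, S0_eq, S0_eq]
  simp only [Function.comp, corner_eq_ctr 0, corner_eq_ctr 1, corner_eq_ctr 2,
    ctr_symm 1 0, ctr_symm 2 0, ctr_symm 2 1]
  ring

lemma S_step_ge (m : ℕ) (f : Pt → ℝ) : (3/5) * S m f ≤ S (m+1) f := by
  induction m generalizing f with
  | zero =>
    have h := cell_identity f
    have h2 := quad_nonneg
      (f (ctr 0 (sierA 1)) - (2*f (sierA 0) + 2*f (sierA 1) + f (sierA 2))/5)
      (f (ctr 1 (sierA 2)) - (f (sierA 0) + 2*f (sierA 1) + 2*f (sierA 2))/5)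
      (f (ctr 0 (sierA 2)) - (2*f (sierA 0) + f (sierA 1) + 2*f (sierA 2))/5)
    linarith
  | succ m ih =>
    rw [Ssucc (m+1), Ssucc m, Finset.mul_sum]
    exact Finset.sum_le_sum fun i _ => ih _

lemma eq_case (f : Pt → ℝ) (h : S 1 f = (3/5) * S 0 f) :
    f (ctr 0 (sierA 1)) = (2*f (sierA 0) + 2*f (sierA 1) + f (sierA 2))/5 ∧
    f (ctr 1 (sierA 2)) = (f (sierA 0) + 2*f (sierA 1) + 2*f (sierA 2))/5 ∧
    f (ctr 0 (sierA 2)) = (2*f (sierA 0) + f (sierA 1) + 2*f (sierA 2))/5 := by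
  have hid := cell_identity f
  have hQ : ((f (ctr 0 (sierA 1)) - (2*f (sierA 0) + 2*f (sierA 1) + f (sierA 2))/5)
              - (f (ctr 1 (sierA 2)) - (f (sierA 0) + 2*f (sierA 1) + 2*f (sierA 2))/5)) ^ 2
           + ((f (ctr 1 (sierA 2)) - (f (sierA 0) + 2*f (sierA 1) + 2*f (sierA 2))/5)
              - (f (ctr 0 (sierA 2)) - (2*f (sierA 0) + f (sierA 1) + 2*f (sierA 2))/5)) ^ 2
           + ((f (ctr 0 (sierA 2)) - (2*f (sierA 0) + f (sierA 1) + 2*f (sierA 2))/5)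
              - (f (ctr 0 (sierA 1)) - (2*f (sierA 0) + 2*f (sierA 1) + f (sierA 2))/5)) ^ 2
           + 2 * ((f (ctr 0 (sierA 1)) - (2*f (sierA 0) + 2*f (sierA 1) + f (sierA 2))/5) ^ 2
                + (f (ctr 1 (sierA 2)) - (f (sierA 0) + 2*f (sierA 1) + 2*f (sierA 2))/5) ^ 2
                + (f (ctr 0 (sierA 2)) - (2*f (sierA 0) + f (sierA 1) + 2*f (sierA 2))/5) ^ 2) = 0 := by
    linarith
  obtain ⟨hx, hy, hz⟩ := quad_zero hQ
  refine ⟨by linarith, by linarith, by linarith⟩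


lemma fin3_cases (i : Fin 3) : i = 0 ∨ i = 1 ∨ i = 2 := by
  fin_cases i <;> simp

lemma uniq_step (m : ℕ) : ∀ v w : Pt → ℝ, (∀ x ∈ V m, v x = w x) →
    S (m+1) v = (3/5) * S m v → S (m+1) w = (3/5) * S m w →
    ∀ x ∈ V (m+1), v x = w x := by
  induction m with
  | zero =>
    intro v w hvw hv hw x hx
    obtain ⟨i, y, hy, rfl⟩ := mem_V_succ.mp hx
    have hy' : y = sierA 0 ∨ y = sierA 1 ∨ y = sierA 2 := by simpa [V] using hy
    have e0 := hvw _ (corner_mem 0 0)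
    have e1 := hvw _ (corner_mem 0 1)
    have e2 := hvw _ (corner_mem 0 2)
    have Ev := eq_case v hv
    have Ew := eq_case w hw
    rcases hy' with rfl | rfl | rfl <;> rcases fin3_cases i with rfl | rfl | rfl <;>
      (try simp only [corner_eq_ctr, ctr_symm 1 0, ctr_symm 2 0, ctr_symm 2 1]) <;>
      first
        | exact e0
        | exact e1
        | exact e2
        | rw [Ev.1, Ew.1, e0, e1, e2]
        | rw [Ev.2.1, Ew.2.1, e0, e1, e2]
        | rw [Ev.2.2, Ew.2.2, e0, e1, e2]
  | succ m ih =>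
    intro v w hvw hv hw x hx
    have hsplit : ∀ f : Pt → ℝ, S (m+1+1) f = (3/5) * S (m+1) f →
        ∀ i : Fin 3, S (m+1) (fun z => f (ctr i z)) = (3/5) * S m (fun z => f (ctr i z)) := by
      intro f hf i
      have h1 : ∀ j : Fin 3, (3/5) * S m (fun z => f (ctr j z)) ≤ S (m+1) (fun z => f (ctr j z)) :=
        fun j => S_step_ge m _
      have hsum : ∑ j : Fin 3, S (m+1) (fun z => f (ctr j z))
          = ∑ j : Fin 3, (3/5) * S m (fun z => f (ctr j z)) := by
        rw [← Finset.mul_sum, ← Ssucc, ← Ssucc]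
        exact hf
      by_contra hne
      have hlt : (3/5) * S m (fun z => f (ctr i z)) < S (m+1) (fun z => f (ctr i z)) :=
        lt_of_le_of_ne (h1 i) (fun h => hne h.symm)
      have : ∑ j : Fin 3, (3/5) * S m (fun z => f (ctr j z))
          < ∑ j : Fin 3, S (m+1) (fun z => f (ctr j z)) :=
        Finset.sum_lt_sum (fun j _ => h1 j) ⟨i, Finset.mem_univ i, hlt⟩
      linarith [hsum]
    obtain ⟨i, y, hy, rfl⟩ := mem_V_succ.mp hx
    exact ih (fun z => v (ctr i z)) (fun z => w (ctr i z))
      (fun z hz => hvw _ (mem_V_succ.mpr ⟨i, z, hz, rfl⟩))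
      (hsplit v hv i) (hsplit w hw i) y hy


def cinv (i : Fin 3) (y : Pt) : Pt := (2 * y.1 - (sierA i).1, 2 * y.2 - (sierA i).2)

lemma cinv_ctr (i : Fin 3) (x : Pt) : cinv i (ctr i x) = x := by
  simp only [cinv, ctr]
  exact Prod.ext (by ring) (by ring)

-- distinctness of the six level-1 points
lemma ne_A_M01 : sierA 0 ≠ ctr 0 (sierA 1) := by
  intro h; have := congrArg Prod.fst h; norm_num [ctr, sierA] at this
lemma ne_A_M12 : sierA 0 ≠ ctr 1 (sierA 2) := by
  intro h; have := congrArg Prod.fst h; norm_num [ctr, sierA] at this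
lemma ne_A_M02 : sierA 0 ≠ ctr 0 (sierA 2) := by
  intro h; have := congrArg Prod.fst h; norm_num [ctr, sierA] at this
lemma ne_B_M01 : sierA 1 ≠ ctr 0 (sierA 1) := by
  intro h; have := congrArg Prod.fst h; norm_num [ctr, sierA] at this
lemma ne_B_M12 : sierA 1 ≠ ctr 1 (sierA 2) := by
  intro h; have := congrArg Prod.fst h; norm_num [ctr, sierA] at this
lemma ne_B_M02 : sierA 1 ≠ ctr 0 (sierA 2) := by
  intro h; have := congrArg Prod.snd h; norm_num [ctr, sierA] at this
lemma ne_C_M01 : sierA 2 ≠ ctr 0 (sierA 1) := by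
  intro h; have := congrArg Prod.fst h; norm_num [ctr, sierA] at this
lemma ne_C_M12 : sierA 2 ≠ ctr 1 (sierA 2) := by
  intro h; have := congrArg Prod.fst h; norm_num [ctr, sierA] at this
lemma ne_C_M02 : sierA 2 ≠ ctr 0 (sierA 2) := by
  intro h; have := congrArg Prod.fst h; norm_num [ctr, sierA] at this
lemma ne_M01_M12 : ctr 0 (sierA 1) ≠ ctr 1 (sierA 2) := by
  intro h; have := congrArg Prod.fst h; norm_num [ctr, sierA] at this
lemma ne_M01_M02 : ctr 0 (sierA 1) ≠ ctr 0 (sierA 2) := by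
  intro h; have := congrArg Prod.fst h; norm_num [ctr, sierA] at this
lemma ne_M12_M02 : ctr 1 (sierA 2) ≠ ctr 0 (sierA 2) := by
  intro h; have := congrArg Prod.fst h; norm_num [ctr, sierA] at this

lemma EX : ∀ (m : ℕ) (v : Pt → ℝ), ∃ w : Pt → ℝ,
    (∀ x ∈ V m, w x = v x) ∧ S (m+1) w = (3/5) * S m v := by
  intro m
  induction m with
  | zero =>
    intro v
    refine ⟨fun x =>
      if x = ctr 0 (sierA 1) then (2 * v (sierA 0) + 2 * v (sierA 1) + v (sierA 2)) / 5
      else if x = ctr 1 (sierA 2) then (v (sierA 0) + 2 * v (sierA 1) + 2 * v (sierA 2)) / 5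
      else if x = ctr 0 (sierA 2) then (2 * v (sierA 0) + v (sierA 1) + 2 * v (sierA 2)) / 5
      else v x, ?_, ?_⟩
    · intro x hx
      have hx' : x = sierA 0 ∨ x = sierA 1 ∨ x = sierA 2 := by simpa [V] using hx
      rcases hx' with rfl | rfl | rfl <;>
        simp only [if_neg ne_A_M01, if_neg ne_A_M12, if_neg ne_A_M02,
          if_neg ne_B_M01, if_neg ne_B_M12, if_neg ne_B_M02,
          if_neg ne_C_M01, if_neg ne_C_M12, if_neg ne_C_M02]
    · set w : Pt → ℝ := fun x =>
        if x = ctr 0 (sierA 1) then (2 * v (sierA 0) + 2 * v (sierA 1) + v (sierA 2)) / 5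
        else if x = ctr 1 (sierA 2) then (v (sierA 0) + 2 * v (sierA 1) + 2 * v (sierA 2)) / 5
        else if x = ctr 0 (sierA 2) then (2 * v (sierA 0) + v (sierA 1) + 2 * v (sierA 2)) / 5
        else v x with hw
      have wA : w (sierA 0) = v (sierA 0) :=
        (if_neg ne_A_M01).trans ((if_neg ne_A_M12).trans (if_neg ne_A_M02))
      have wB : w (sierA 1) = v (sierA 1) :=
        (if_neg ne_B_M01).trans ((if_neg ne_B_M12).trans (if_neg ne_B_M02))
      have wC : w (sierA 2) = v (sierA 2) :=
        (if_neg ne_C_M01).trans ((if_neg ne_C_M12).trans (if_neg ne_C_M02))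
      have w01 : w (ctr 0 (sierA 1)) = (2 * v (sierA 0) + 2 * v (sierA 1) + v (sierA 2)) / 5 :=
        if_pos rfl
      have w12 : w (ctr 1 (sierA 2)) = (v (sierA 0) + 2 * v (sierA 1) + 2 * v (sierA 2)) / 5 :=
        (if_neg (Ne.symm ne_M01_M12)).trans (if_pos rfl)
      have w02 : w (ctr 0 (sierA 2)) = (2 * v (sierA 0) + v (sierA 1) + 2 * v (sierA 2)) / 5 :=
        (if_neg (Ne.symm ne_M01_M02)).trans ((if_neg (Ne.symm ne_M12_M02)).trans (if_pos rfl))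
      have h0 : S 0 w = S 0 v := by rw [S0_eq, S0_eq, wA, wB, wC]
      rw [cell_identity w, h0, w01, w12, w02, wA, wB, wC]
      ring
  | succ m ih =>
    intro v
    obtain ⟨w0, hw0a, hw0b⟩ := ih (fun z => v (ctr 0 z))
    obtain ⟨w1, hw1a, hw1b⟩ := ih (fun z => v (ctr 1 z))
    obtain ⟨w2, hw2a, hw2b⟩ := ih (fun z => v (ctr 2 z))
    classical
    set w : Pt → ℝ := fun x =>
      if x ∈ (V (m+1)).image (ctr 0) then w0 (cinv 0 x)
      else if x ∈ (V (m+1)).image (ctr 1) then w1 (cinv 1 x)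
      else if x ∈ (V (m+1)).image (ctr 2) then w2 (cinv 2 x)
      else v x with hw
    -- cross-branch helper
    have lamV1 : ∀ z ∈ V (m+1), ∀ k, 0 ≤ lam k z ∧ lam k z ≤ Real.sqrt 3 :=
      fun z hz k => lam_V hz k
    have key : ∀ (j k : Fin 3), j ≠ k → ∀ y z, y ∈ V (m+1) → z ∈ V (m+1) →
        ctr j y = ctr k z → y = sierA k ∧ z = sierA j :=
      fun j k hjk y z hy hz h => cross_cell hjk (lamV1 y hy) (lamV1 z hz) h
    -- w ∘ ctr i agrees with w_i on V (m+1)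
    have claim0 : ∀ z ∈ V (m+1), w (ctr 0 z) = w0 z := by
      intro z hz
      rw [hw]
      simp only
      rw [if_pos (Finset.mem_image.mpr ⟨z, hz, rfl⟩), cinv_ctr]
    have claim1 : ∀ z ∈ V (m+1), w (ctr 1 z) = w1 z := by
      intro z hz
      rw [hw]; simp only
      by_cases h0 : ctr 1 z ∈ (V (m+1)).image (ctr 0)
      · obtain ⟨y, hy, hyz⟩ := Finset.mem_image.mp h0
        obtain ⟨hz', hy'⟩ := key 1 0 (by decide) z y hz hy hyz.symm
        rw [if_pos h0]
        subst hz'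
        have hyx : ctr 1 (sierA 0) = ctr 0 (sierA 1) := ctr_symm 1 0
        rw [hyx, cinv_ctr]
        rw [hw1a _ (corner_mem m 0) ]
        rw [hw0a _ (corner_mem m 1)]
        rw [ctr_symm 1 0]
      · rw [if_neg h0, if_pos (Finset.mem_image.mpr ⟨z, hz, rfl⟩), cinv_ctr]
    have claim2 : ∀ z ∈ V (m+1), w (ctr 2 z) = w2 z := by
      intro z hz
      rw [hw]; simp only
      by_cases h0 : ctr 2 z ∈ (V (m+1)).image (ctr 0)
      · obtain ⟨y, hy, hyz⟩ := Finset.mem_image.mp h0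
        obtain ⟨hz', hy'⟩ := key 2 0 (by decide) z y hz hy hyz.symm
        rw [if_pos h0]
        subst hz'
        rw [ctr_symm 2 0, cinv_ctr]
        rw [hw2a _ (corner_mem m 0), hw0a _ (corner_mem m 2)]
        rw [ctr_symm 2 0]
      · by_cases h1 : ctr 2 z ∈ (V (m+1)).image (ctr 1)
        · obtain ⟨y, hy, hyz⟩ := Finset.mem_image.mp h1
          obtain ⟨hz', hy'⟩ := key 2 1 (by decide) z y hz hy hyz.symm
          rw [if_neg h0, if_pos h1]
          subst hz'
          rw [ctr_symm 2 1, cinv_ctr]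
          rw [hw2a _ (corner_mem m 1), hw1a _ (corner_mem m 2)]
          rw [ctr_symm 2 1]
        · rw [if_neg h0, if_neg h1, if_pos (Finset.mem_image.mpr ⟨z, hz, rfl⟩), cinv_ctr]
    refine ⟨w, ?_, ?_⟩
    · -- agreement on V (m+1)
      intro x hx
      obtain ⟨k, y, hy, rfl⟩ := mem_V_succ.mp hx
      have hyV : y ∈ V (m+1) := V_mono hy
      rcases fin3_cases k with rfl | rfl | rfl
      · rw [claim0 y hyV, hw0a _ hy]
      · rw [claim1 y hyV, hw1a _ hy]
      · rw [claim2 y hyV, hw2a _ hy]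
    · -- energy
      have e0 : S (m+1) (fun z => w (ctr 0 z)) = S (m+1) w0 := S_congr claim0
      have e1 : S (m+1) (fun z => w (ctr 1 z)) = S (m+1) w1 := S_congr claim1
      have e2 : S (m+1) (fun z => w (ctr 2 z)) = S (m+1) w2 := S_congr claim2
      rw [Ssucc (m+1) w, Fin.sum_univ_three, Ssucc m v, Fin.sum_univ_three,
        e0, e1, e2, hw0b, hw1b, hw2b]
      ring


lemma En_S (m : ℕ) (f : Pt → ℝ) : En m f = (5/3 : ℝ)^m * S m f / 2 := rfl

lemma pow_53_ne (k : ℕ) : ((5:ℝ)/3)^k ≠ 0 := pow_ne_zero _ (by norm_num)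

/-- from constant energy, extract one-step harmonicity -/
lemma harm_of_const {n : ℕ} {u f : Pt → ℝ} (hf : ∀ p : ℕ, En (n + p) f = En n u) (p : ℕ) :
    S (n + p + 1) f = (3/5) * S (n + p) f := by
  have e1 : En (n + p) f = En (n + (p+1)) f := (hf p).trans (hf (p+1)).symm
  rw [En_S, En_S] at e1
  have hnp : n + (p + 1) = (n + p) + 1 := by ring
  rw [hnp, pow_succ] at e1
  have hne := pow_53_ne (n + p)
  have e2 : ((5:ℝ)/3)^(n+p) * S (n+p) f = ((5:ℝ)/3)^(n+p) * ((5/3) * S ((n+p)+1) f) := by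
    linear_combination (2:ℝ) * e1
  have := mul_left_cancel₀ hne e2
  linarith


/-- For every `n ≥ 0` and every `u : V* → ℝ` there is a unique function
`ū_n : V* → ℝ` (unique up to its values on `V*`) that agrees with `u` on `V_n`
and satisfies `E_{n+p}(ū_n, ū_n) = E_n(u,u)` for every `p ≥ 0`. -/
theorem harmonic_extension_exists_unique (n : ℕ) (u : Pt → ℝ) :
    ∃ ub : Pt → ℝ,
      (∀ x ∈ (V n : Set Pt), ub x = u x) ∧
      (∀ p : ℕ, En (n + p) ub = En n u) ∧
      ∀ ub' : Pt → ℝ,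
        (∀ x ∈ (V n : Set Pt), ub' x = u x) →
        (∀ p : ℕ, En (n + p) ub' = En n u) →
        ∀ x ∈ Vstar, ub' x = ub x := by
  classical
  -- the recursive sequence of extensions
  let g : ℕ → (Pt → ℝ) := fun p => Nat.rec u (fun p gp => Classical.choose (EX (n+p) gp)) p
  have hg0 : g 0 = u := rfl
  have hga : ∀ p, ∀ x ∈ V (n+p), g (p+1) x = g p x :=
    fun p => (Classical.choose_spec (EX (n+p) (g p))).1
  have hgb : ∀ p, S (n+p+1) (g (p+1)) = (3/5) * S (n+p) (g p) :=
    fun p => (Classical.choose_spec (EX (n+p) (g p))).2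
  -- stability
  have hstab : ∀ p q, p ≤ q → ∀ x ∈ V (n+p), g q x = g p x := by
    intro p q hpq
    induction q with
    | zero =>
      intro x hx
      have : p = 0 := Nat.le_zero.mp hpq
      subst this; rfl
    | succ q ih =>
      intro x hx
      rcases Nat.lt_or_ge p (q+1) with h | h
      · have hpq' : p ≤ q := Nat.lt_succ_iff.mp h
        have hx' : x ∈ V (n+q) := V_le (by omega) hx
        rw [hga q x hx', ih hpq' x hx]
      · have : p = q + 1 := le_antisymm hpq h
        subst this; rfl
  -- energy of the sequence
  have hgE : ∀ p, S (n+p) (g p) = (3/5 : ℝ)^p * S n u := by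
    intro p
    induction p with
    | zero => simp [hg0]
    | succ p ih => rw [show n + (p+1) = n + p + 1 from rfl, hgb p, ih, pow_succ]; ring
  -- the limit function
  set ub : Pt → ℝ := fun x =>
    if h : ∃ p, x ∈ V (n+p) then g (Nat.find h) x else u x with hub
  have ub_eq : ∀ p, ∀ x ∈ V (n+p), ub x = g p x := by
    intro p x hx
    have h : ∃ p, x ∈ V (n+p) := ⟨p, hx⟩
    rw [hub]
    simp only
    rw [dif_pos h]
    exact (hstab (Nat.find h) p (Nat.find_min' h hx) x (Nat.find_spec h)).symm
  have hagree : ∀ x ∈ (V n : Set Pt), ub x = u x := by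
    intro x hx
    have hx0 : x ∈ V (n + 0) := by simpa using hx
    rw [ub_eq 0 x hx0, hg0]
  have hSub : ∀ p, S (n+p) ub = (3/5 : ℝ)^p * S n u := by
    intro p
    rw [S_congr (fun x hx => ub_eq p x hx), hgE p]
  have hEn : ∀ p : ℕ, En (n + p) ub = En n u := by
    intro p
    rw [En_S, En_S, hSub p, pow_add]
    have h2 : ((5:ℝ)/3)^p * (3/5)^p = 1 := by
      rw [← mul_pow]; norm_num
    linear_combination (S n u * ((5:ℝ)/3)^n / 2) * h2
  refine ⟨ub, hagree, hEn, ?_⟩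
  intro ub' hagree' hEn' x hx
  -- harmonic at each step
  have harm' := harm_of_const hEn'
  have harm := harm_of_const hEn
  have claim : ∀ p, ∀ x ∈ V (n+p), ub' x = ub x := by
    intro p
    induction p with
    | zero =>
      intro x hx
      rw [hagree' x (by simpa using hx), hagree x (by simpa using hx)]
    | succ p ih =>
      intro x hx
      exact uniq_step (n+p) ub' ub ih (harm' p) (harm p) x hx
  obtain ⟨m, hm⟩ : ∃ m, x ∈ V m := by
    simpa [Vstar] using hx
  rcases Nat.le_total m n with h | h
  · exact claim 0 x (by simpa using V_le h hm)
  · exact claim (m - n) x (by rwa [show n + (m - n) = m by omega])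

end
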